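/- Let A ⊆ {1,…,p} with |A| + 1 ≤ 6s* and let k ∉ A. Set z_k = (I − Φ_A)X_k. Then z_k ≠ 0, the difference Φ_{A∪{k}} − Φ_A equals the orthogonal projection ‖z_k‖^{−2} z_k z_kᵀ onto the line spanned by z_k, and for every w ∈ ℝ^n, ‖Φ_{A∪{k}} w‖² − ‖Φ_A w‖² ≤ ⟨(I − Φ_A)X_k, w⟩² / (nν). -/

import Mathlib

open scoped BigOperators
open Finset

noncomputable section

/-- Span of the columns `X j`, `j ∈ S`. -/
def colSpan {n p : ℕ} (X : Fin p → EuclideanSpace ℝ (Fin n)) (S : Finset (Fin p)) :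
    Submodule ℝ (EuclideanSpace ℝ (Fin n)) :=
  Submodule.span ℝ (X '' ↑S)

/-- `Φ_S`, the orthogonal projection of ℝ^n onto the span of the columns in `S`. -/
noncomputable def proj {n p : ℕ} (X : Fin p → EuclideanSpace ℝ (Fin n)) (S : Finset (Fin p)) :
    EuclideanSpace ℝ (Fin n) →ₗ[ℝ] EuclideanSpace ℝ (Fin n) :=
  (colSpan X S).subtype ∘ₗ (colSpan X S).orthogonalProjection.toLinearMap

/-- Restricted eigenvalue condition: `‖X_S w‖² ≥ n ν ‖w‖²` for all `S` with `|S| ≤ m`. -/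
def RECond {n p : ℕ} (X : Fin p → EuclideanSpace ℝ (Fin n)) (ν : ℝ) (m : ℕ) : Prop :=
  ∀ S : Finset (Fin p), S.card ≤ m → ∀ w : Fin p → ℝ,
    (n : ℝ) * ν * ∑ j ∈ S, w j ^ 2 ≤ ‖∑ j ∈ S, w j • X j‖ ^ 2

end

lemma mem_colSpan_iff {n p : ℕ} (X : Fin p → EuclideanSpace ℝ (Fin n)) (S : Finset (Fin p))
    (v : EuclideanSpace ℝ (Fin n)) :
    v ∈ colSpan X S ↔ ∃ c : Fin p → ℝ, v = ∑ j ∈ S, c j • X j := by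
  constructor
  · intro hv
    obtain ⟨l, hl, rfl⟩ := (Finsupp.mem_span_image_iff_linearCombination ℝ).1 hv
    refine ⟨l, ?_⟩
    rw [Finsupp.linearCombination_apply]
    exact Finsupp.sum_of_support_subset l
      (Finset.coe_subset.1 ((Finsupp.mem_supported ℝ l).1 hl)) (fun i a => a • X i)
      (fun i _ => zero_smul ℝ (X i))
  · rintro ⟨c, rfl⟩
    exact Submodule.sum_mem _ fun j hj =>
      Submodule.smul_mem _ _ (Submodule.subset_span ⟨j, hj, rfl⟩)

lemma re_lower {n p : ℕ} {X : Fin p → EuclideanSpace ℝ (Fin n)} {ν : ℝ} {m : ℕ}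
    (hRE : RECond X ν m) (hν0 : 0 ≤ (n : ℝ) * ν)
    {A : Finset (Fin p)} {k : Fin p} (hk : k ∉ A) (hcard : A.card + 1 ≤ m)
    (c : Fin p → ℝ) :
    (n : ℝ) * ν ≤ ‖X k - ∑ j ∈ A, c j • X j‖ ^ 2 := by
  set w : Fin p → ℝ := fun j => if j = k then 1 else -c j with hw
  have hwk : w k = 1 := by simp [hw]
  have h1 : ∑ j ∈ insert k A, w j • X j = X k - ∑ j ∈ A, c j • X j := by
    rw [Finset.sum_insert hk, hwk, one_smul, sub_eq_add_neg, ← Finset.sum_neg_distrib]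
    congr 1
    refine Finset.sum_congr rfl fun j hj => ?_
    rw [hw]
    simp only []
    rw [if_neg (ne_of_mem_of_not_mem hj hk), neg_smul]
  have h2 := hRE (insert k A) (by rwa [Finset.card_insert_of_notMem hk]) w
  rw [h1] at h2
  have h3 : (1 : ℝ) ≤ ∑ j ∈ insert k A, w j ^ 2 := by
    have := Finset.single_le_sum (f := fun j => w j ^ 2)
      (fun i _ => sq_nonneg _) (Finset.mem_insert_self k A)
    simpa [hwk] using this
  calc (n : ℝ) * ν = (n : ℝ) * ν * 1 := by ring
    _ ≤ (n : ℝ) * ν * ∑ j ∈ insert k A, w j ^ 2 := by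
        exact mul_le_mul_of_nonneg_left h3 hν0
    _ ≤ _ := h2

/-- one-step projection difference. With z_k = (I − Φ_A) X_k ≠ 0,
Φ_{A∪{k}} − Φ_A is the rank-one orthogonal projection onto span z_k, and
‖Φ_{A∪{k}} w‖² − ‖Φ_A w‖² ≤ ⟨(I − Φ_A)X_k, w⟩²/(nν). -/
theorem stmt2 {n p s : ℕ} (hn : 0 < n) (hp : 0 < p) (hs : 0 < s)
    (X : Fin p → EuclideanSpace ℝ (Fin n))
    (hX : ∀ j, ‖X j‖ = Real.sqrt n)
    {ν : ℝ} (hν : 0 < ν) (hRE : RECond X ν (6 * s))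
    (A : Finset (Fin p)) (hcard : A.card + 1 ≤ 6 * s)
    (k : Fin p) (hk : k ∉ A)
    (z : EuclideanSpace ℝ (Fin n)) (hz : z = X k - proj X A (X k)) :
    z ≠ 0 ∧
    (∀ w : EuclideanSpace ℝ (Fin n),
      proj X (insert k A) w - proj X A w = ((inner ℝ z w : ℝ) / ‖z‖ ^ 2) • z) ∧
    (∀ w : EuclideanSpace ℝ (Fin n),
      ‖proj X (insert k A) w‖ ^ 2 - ‖proj X A w‖ ^ 2 ≤
        (inner ℝ z w : ℝ) ^ 2 / ((n : ℝ) * ν)) := by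
  have hnν : 0 < (n : ℝ) * ν := by positivity
  set V := colSpan X A with hV
  set W := colSpan X (insert k A) with hW
  have hprojA : ∀ w, proj X A w = (Submodule.orthogonalProjection V w : EuclideanSpace ℝ (Fin n)) :=
    fun w => rfl
  have hprojW : ∀ w, proj X (insert k A) w
      = (Submodule.orthogonalProjection W w : EuclideanSpace ℝ (Fin n)) := fun w => rfl
  -- z is orthogonal to V
  have hzV : z ∈ Vᗮ := by
    rw [hz, hprojA]
    exact Submodule.sub_starProjection_mem_orthogonal (K := V) (X k)
  -- representation of the projection of X k
  obtain ⟨c, hc⟩ := (mem_colSpan_iff X A (proj X A (X k))).1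
    (by rw [hprojA]; exact (Submodule.orthogonalProjection V (X k)).2)
  have hzrep : z = X k - ∑ j ∈ A, c j • X j := by rw [hz, hc]
  -- lower bound on ‖z‖²
  have hzsq : (n : ℝ) * ν ≤ ‖z‖ ^ 2 := by
    rw [hzrep]; exact re_lower hRE hnν.le hk hcard c
  have hzne : z ≠ 0 := by
    intro h
    rw [h, norm_zero] at hzsq
    norm_num at hzsq
    linarith
  have hVW : V ≤ W := Submodule.span_mono (Set.image_mono (by
    simpa using Finset.subset_insert k A))
  have hzW : z ∈ W := by
    rw [hz, hprojA]
    exact Submodule.sub_mem _ (Submodule.subset_span ⟨k, by simp, rfl⟩)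
      (hVW (Submodule.orthogonalProjection V (X k)).2)
  have key : ∀ w : EuclideanSpace ℝ (Fin n), (Submodule.orthogonalProjection W w : EuclideanSpace ℝ (Fin n))
      = (Submodule.orthogonalProjection V w : EuclideanSpace ℝ (Fin n))
        + ((inner ℝ z w : ℝ) / ‖z‖ ^ 2) • z := by
    intro w
    set cw : ℝ := (inner ℝ z w : ℝ) / ‖z‖ ^ 2 with hcw
    apply Submodule.eq_starProjection_of_mem_of_inner_eq_zero
    · exact Submodule.add_mem _ (hVW (Submodule.orthogonalProjection V w).2) (Submodule.smul_mem _ _ hzW)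
    · set r : EuclideanSpace ℝ (Fin n) :=
        w - ((Submodule.orthogonalProjection V w : EuclideanSpace ℝ (Fin n)) + cw • z) with hr
      have hrV : ∀ v ∈ V, (inner ℝ r v : ℝ) = 0 := by
        intro v hv
        have h1 : (inner ℝ (w - (Submodule.orthogonalProjection V w : EuclideanSpace ℝ (Fin n))) v : ℝ) = 0 :=
          (Submodule.mem_orthogonal' V _).1 (Submodule.sub_starProjection_mem_orthogonal (K := V) w)
            v hv
        have h2 : (inner ℝ z v : ℝ) = 0 := (Submodule.mem_orthogonal' V z).1 hzV v hv
        have heq : r = (w - (Submodule.orthogonalProjection V w : EuclideanSpace ℝ (Fin n))) - cw • z := by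
          rw [hr]; abel
        rw [heq, inner_sub_left, h1, real_inner_smul_left, h2]
        ring
      have hrz : (inner ℝ r z : ℝ) = 0 := by
        have h2 : (inner ℝ ((Submodule.orthogonalProjection V w : EuclideanSpace ℝ (Fin n))) z : ℝ) = 0 :=
          hzV _ (Submodule.orthogonalProjection V w).2
        have hz2 : ‖z‖ ^ 2 ≠ 0 := pow_ne_zero _ (norm_ne_zero_iff.2 hzne)
        rw [hr, inner_sub_left, inner_add_left, real_inner_smul_left, h2,
          real_inner_self_eq_norm_sq, hcw, real_inner_comm w z]
        field_simp
        ring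
      have hgen : ∀ j ∈ insert k A, (inner ℝ r (X j) : ℝ) = 0 := by
        intro j hj
        rcases Finset.mem_insert.1 hj with rfl | hjA
        · have hXk : X j = (Submodule.orthogonalProjection V (X j) : EuclideanSpace ℝ (Fin n)) + z := by
            rw [hz, hprojA]; abel
          rw [hXk, inner_add_right, hrV _ (Submodule.orthogonalProjection V (X j)).2, hrz, add_zero]
        · exact hrV _ (Submodule.subset_span ⟨j, hjA, rfl⟩)
      have hle : W ≤ (ℝ ∙ r)ᗮ := by
        rw [hW, colSpan, Submodule.span_le]
        rintro _ ⟨j, hj, rfl⟩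
        rw [SetLike.mem_coe, Submodule.mem_orthogonal_singleton_iff_inner_right]
        exact hgen j (Finset.mem_coe.1 hj)
      intro u hu
      exact (Submodule.mem_orthogonal_singleton_iff_inner_right).1 (hle hu)
  refine ⟨hzne, fun w => ?_, fun w => ?_⟩
  · rw [hprojW, hprojA, key w]; abel
  · have hkey := key w
    set cw : ℝ := (inner ℝ z w : ℝ) / ‖z‖ ^ 2 with hcw
    have horth : (inner ℝ ((Submodule.orthogonalProjection V w : EuclideanSpace ℝ (Fin n))) (cw • z) : ℝ)
        = 0 := by
      rw [real_inner_smul_right, hzV _ (Submodule.orthogonalProjection V w).2, mul_zero]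
    have hpyth : ‖proj X (insert k A) w‖ ^ 2 = ‖proj X A w‖ ^ 2 + ‖cw • z‖ ^ 2 := by
      rw [hprojW, hprojA, hkey, norm_add_sq_real, horth]; ring
    have hznn : ‖z‖ ≠ 0 := norm_ne_zero_iff.2 hzne
    have hznorm : ‖cw • z‖ ^ 2 = (inner ℝ z w : ℝ) ^ 2 / ‖z‖ ^ 2 := by
      rw [norm_smul, mul_pow, Real.norm_eq_abs, sq_abs, hcw]
      field_simp
    rw [hpyth, hznorm]
    have : (inner ℝ z w : ℝ) ^ 2 / ‖z‖ ^ 2 ≤ (inner ℝ z w : ℝ) ^ 2 / ((n : ℝ) * ν) := by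
      gcongr
    linarith
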